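/- Let ψ be a unit speed curve in ℝ³ with Frenet frame (T, N, B) satisfying, in the parameter θ = ∫κ ds, the equations T' = N, N' = -T + fB, B' = -fN, where f = τ/κ with f' nowhere zero. Then the principal normal N satisfies the third-order vector ODE: (1/f)·d/dθ[ (1/f')·( N'' + (1+f²)N ) ] + N = 0. -/

import Mathlib

open Real

/-- With the modified Frenet equations T' = N, N' = -T + f B, B' = -f N
in the parameter θ = ∫κ ds, where f = τ/κ with f' nowhere zero (and f nowhere zero),
the principal normal satisfies the third order vector ODE
(1/f) • d/dθ [ (1/f') • ( N'' + (1+f²) N ) ] + N = 0. -/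
theorem normal_third_order_ode
    (T N B : ℝ → EuclideanSpace ℝ (Fin 3)) (f : ℝ → ℝ)
    (hT : ∀ θ, HasDerivAt T (N θ) θ)
    (hN : ∀ θ, HasDerivAt N (-T θ + f θ • B θ) θ)
    (hB : ∀ θ, HasDerivAt B (-(f θ) • N θ) θ)
    (hN3 : ContDiff ℝ 3 N)
    (hf : ContDiff ℝ 2 f)
    (hf0 : ∀ θ, f θ ≠ 0)
    (hf' : ∀ θ, deriv f θ ≠ 0) :
    ∀ θ, (f θ)⁻¹ •
        deriv (fun x => (deriv f x)⁻¹ • (deriv (deriv N) x + (1 + f x ^ 2) • N x)) θ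
      + N θ = 0 := by
  intro θ
  have hderivN : deriv N = fun x => -T x + f x • B x := funext fun x => (hN x).deriv
  have hdd : ∀ x, HasDerivAt (deriv N)
      (-N x + (f x • (-(f x) • N x) + deriv f x • B x)) x := by
    intro x
    rw [hderivN]
    have hfx : HasDerivAt f (deriv f x) x :=
      ((hf.differentiable (by norm_num)) x).hasDerivAt
    exact ((hT x).neg).add (hfx.smul (hB x))
  have key : (fun x => (deriv f x)⁻¹ • (deriv (deriv N) x + (1 + f x ^ 2) • N x)) = B := by
    funext x
    rw [(hdd x).deriv]
    have : -N x + (f x • (-(f x) • N x) + deriv f x • B x) + (1 + f x ^ 2) • N x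
        = deriv f x • B x := by
      simp [smul_smul, pow_two]
      module
    rw [this, inv_smul_smul₀ (hf' x)]
  rw [key, (hB θ).deriv, smul_smul]
  have : (f θ)⁻¹ * -(f θ) = -1 := by
    field_simp
    rw [div_self (hf0 θ)]
  rw [this]
  simp
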